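/- Every alternate (1-antiperiodic) coloring φ of a Type 8 cycle is a constant 2-labelling with constants a = (p/2−2)y + z + t and b = (p/2)x. -/
import Mathlib

private lemma sum_range_two_mul_aux (m : ℕ) (f : ℕ → ℝ) :
    ∑ i ∈ Finset.range (2*m), f i = ∑ j ∈ Finset.range m, (f (2*j) + f (2*j+1)) := by
  induction m with
  | zero => simp
  | succ n ih =>
      have h : 2*(n+1) = (2*n+1)+1 := by ring
      rw [h, Finset.sum_range_succ, Finset.sum_range_succ, ih, Finset.sum_range_succ]
      ring

private lemma zmod_sum_reindex_aux (p : ℕ) [NeZero p] (f : ZMod p → ℝ) :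
    (∑ u : ZMod p, f u) = ∑ i ∈ Finset.range p, f (i : ZMod p) := by
  refine Finset.sum_nbij' (i := fun u : ZMod p => u.val)
    (j := fun i : ℕ => (i : ZMod p)) ?_ ?_ ?_ ?_ ?_ <;> intros a ha <;>
    simp_all [ZMod.val_lt, ZMod.natCast_val, ZMod.cast_id, ZMod.val_cast_of_lt,
      Nat.mod_eq_of_lt]

/-- Every alternate coloring of a Type 8 cycle
(`z (xy)^((p-4)/4) x t x (yx)^((p-4)/4)`) is a constant 2-labelling with
constants `a = (p/2-2)y + z + t` and `b = (p/2)x`. -/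
theorem type8_alternate_constant2Labelling
    (p : ℕ) [NeZero p] (hp : 8 ≤ p) (hp4 : p % 4 = 0)
    (w : ZMod p → ℝ) (z x y t : ℝ) (hxy : x ≠ y) (hyt : y ≠ t)
    (hw0 : w 0 = z) (hwt : w ((p / 2 : ℕ) : ZMod p) = t)
    (hwx : ∀ i : ℕ, 1 ≤ i → i < p / 2 → Odd i → w (i : ZMod p) = x)
    (hwy : ∀ i : ℕ, 1 ≤ i → i < p / 2 → Even i → w (i : ZMod p) = y)
    (hwsym : ∀ i : ℕ, 1 ≤ i → i < p / 2 →
      w (((p - i : ℕ) : ZMod p)) = w (i : ZMod p))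
    (φ : ZMod p → Bool) (halt : ∀ i : ZMod p, φ (i + 1) ≠ φ i) :
    ∀ k : ZMod p,
      (φ k = true → (∑ u : ZMod p, if φ (u + k) = true then w u else 0) =
        (((p / 2 : ℕ) : ℝ) - 2) * y + z + t) ∧
      (φ k = false → (∑ u : ZMod p, if φ (u + k) = true then w u else 0) =
        ((p / 2 : ℕ) : ℝ) * x) := by
  obtain ⟨q, hq⟩ : ∃ q, p = 4*q := ⟨p/4, by omega⟩
  have hq2 : 2 ≤ q := by omega
  have hp2 : p / 2 = 2*q := by omega
  -- step lemma
  have hstep : ∀ u : ZMod p, φ (u + 1) = !φ u := by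
    intro u
    have := halt u
    cases h1 : φ u <;> cases h2 : φ (u+1) <;> simp_all
  -- parity formula on naturals
  have hnat : ∀ i : ℕ, φ (i : ZMod p) = if Even i then φ 0 else !φ 0 := by
    intro i
    induction i with
    | zero => simp
    | succ n ih =>
        have hc : ((n+1 : ℕ) : ZMod p) = (n : ZMod p) + 1 := by push_cast; ring
        rw [hc, hstep, ih]
        by_cases he : Even n <;> simp [he, Nat.even_add_one]
  -- key: shifting by a natural
  have hkey : ∀ (kk : ZMod p) (i : ℕ),
      φ ((i : ZMod p) + kk) = if Even i then φ kk else !φ kk := by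
    intro kk i
    have hv : ((kk.val : ℕ) : ZMod p) = kk := ZMod.natCast_rightInverse kk
    have h1 : (i : ZMod p) + kk = ((i + kk.val : ℕ) : ZMod p) := by
      push_cast
      rw [hv]
    have h2 := hnat kk.val
    rw [hv] at h2
    rw [h1, hnat, h2]
    by_cases he : Even i <;> by_cases hk : Even kk.val <;>
      simp [Nat.even_add, he, hk]
  -- reindex sums over ZMod p as sums over range p
  have hreindex := zmod_sum_reindex_aux p
  intro k
  have hsum : (∑ u : ZMod p, if φ (u + k) = true then w u else 0) =
      ∑ i ∈ Finset.range p, if φ ((i : ZMod p) + k) = true then w (i : ZMod p) else 0 :=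
    hreindex _
  constructor
  · -- φ k = true : sum over evens
    intro hk
    have hterm : ∀ i : ℕ, (if φ ((i : ZMod p) + k) = true then w (i : ZMod p) else 0) =
        (if Even i then w (i : ZMod p) else 0) := by
      intro i
      rw [hkey]
      by_cases he : Even i <;> simp [he, hk]
    rw [hsum, Finset.sum_congr rfl (fun i _ => hterm i)]
    have hpp : Finset.range p = Finset.range (2*(2*q)) := by
      congr 1
      omega
    rw [hpp, sum_range_two_mul_aux]
    have heven : ∀ j : ℕ, Even (2*j) := fun j => ⟨j, by ring⟩
    have hodd : ∀ j : ℕ, ¬ Even (2*j+1) := by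
      intro j h
      rcases h with ⟨r, hr⟩
      omega
    have hterm2 : ∀ j ∈ Finset.range (2*q),
        ((if Even (2*j) then w ((2*j : ℕ) : ZMod p) else 0) +
          (if Even (2*j+1) then w ((2*j+1 : ℕ) : ZMod p) else 0)) =
        (if j = 0 then z else if j = q then t else y) := by
      intro j hj
      rw [Finset.mem_range] at hj
      rw [if_pos (heven j), if_neg (hodd j), add_zero]
      by_cases h0 : j = 0
      · subst h0; simpa using hw0
      · rw [if_neg h0]
        by_cases hjq : j = q
        · rw [if_pos hjq]
          have h2 : 2*j = p/2 := by omega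
          rw [h2, hwt]
        · rw [if_neg hjq]
          rcases lt_or_gt_of_ne hjq with hlt | hgt
          · exact hwy (2*j) (by omega) (by omega) (heven j)
          · have h1 : 1 ≤ p - 2*j := by omega
            have h2 : p - 2*j < p/2 := by omega
            have h3 := hwsym (p - 2*j) h1 h2
            have h4 : p - (p - 2*j) = 2*j := by omega
            rw [h4] at h3
            rw [h3]
            exact hwy (p - 2*j) h1 h2 ⟨2*q - j, by omega⟩
    rw [Finset.sum_congr rfl hterm2]
    have hsplit : ∀ j : ℕ, (if j = 0 then z else if j = q then t else y) =
        y + (if j = 0 then z - y else 0) + (if j = q then t - y else 0) := by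
      intro j
      by_cases h0 : j = 0
      · rw [if_pos h0, if_pos h0, if_neg (by omega : j ≠ q)]
        ring
      · rw [if_neg h0, if_neg h0]
        by_cases hjq : j = q
        · rw [if_pos hjq, if_pos hjq]
          ring
        · rw [if_neg hjq, if_neg hjq]
          ring
    rw [Finset.sum_congr rfl (fun j _ => hsplit j)]
    rw [Finset.sum_add_distrib, Finset.sum_add_distrib, Finset.sum_const,
      Finset.sum_ite_eq' (Finset.range (2*q)) 0 (fun _ => z - y),
      Finset.sum_ite_eq' (Finset.range (2*q)) q (fun _ => t - y)]
    rw [if_pos (Finset.mem_range.mpr (by omega)), if_pos (Finset.mem_range.mpr (by omega))]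
    rw [Finset.card_range, hp2, nsmul_eq_mul]
    push_cast
    ring
  · -- φ k = false : sum over odds
    intro hk
    have hterm : ∀ i : ℕ, (if φ ((i : ZMod p) + k) = true then w (i : ZMod p) else 0) =
        (if Even i then 0 else w (i : ZMod p)) := by
      intro i
      rw [hkey]
      by_cases he : Even i <;> simp [he, hk]
    rw [hsum, Finset.sum_congr rfl (fun i _ => hterm i)]
    have hpp : Finset.range p = Finset.range (2*(2*q)) := by
      congr 1
      omega
    rw [hpp, sum_range_two_mul_aux]
    have heven : ∀ j : ℕ, Even (2*j) := fun j => ⟨j, by ring⟩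
    have hodd : ∀ j : ℕ, ¬ Even (2*j+1) := by
      intro j h
      rcases h with ⟨r, hr⟩
      omega
    have hterm2 : ∀ j ∈ Finset.range (2*q),
        ((if Even (2*j) then (0:ℝ) else w ((2*j : ℕ) : ZMod p)) +
          (if Even (2*j+1) then 0 else w ((2*j+1 : ℕ) : ZMod p))) = x := by
      intro j hj
      rw [Finset.mem_range] at hj
      rw [if_pos (heven j), if_neg (hodd j), zero_add]
      by_cases hlt : 2*j+1 < p/2
      · exact hwx (2*j+1) (by omega) hlt ⟨j, by ring⟩
      · have hne : 2*j+1 ≠ p/2 := by omega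
        have h1 : 1 ≤ p - (2*j+1) := by omega
        have h2 : p - (2*j+1) < p/2 := by omega
        have h3 := hwsym (p - (2*j+1)) h1 h2
        have h4 : p - (p - (2*j+1)) = 2*j+1 := by omega
        rw [h4] at h3
        rw [h3]
        exact hwx (p - (2*j+1)) h1 h2 ⟨2*q - j - 1, by omega⟩
    rw [Finset.sum_congr rfl hterm2, Finset.sum_const, Finset.card_range, hp2, nsmul_eq_mul]
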